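/- The function (z : Fin 3 → ℂ) ↦ 1/(‖z 0 − z 1‖ · ‖z 1 − z 2‖ · ‖z 2 − z 0‖), from (Fin 3 → ℂ) to ℝ, is integrable on the open unit polydisc {z : Fin 3 → ℂ | ∀ i, ‖z i‖ < 1} with respect to the (product) Lebesgue measure on Fin 3 → ℂ. -/

import Mathlib

open MeasureTheory Set

lemma L1 : IntegrableOn (fun x : ℝ => |x| ^ (-(3/4) : ℝ)) (Ioo (-2) 2) := by
  have h0 : IntegrableOn (fun x : ℝ => |x| ^ (-(3/4) : ℝ)) {(0:ℝ)} := by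
    rw [IntegrableOn, Measure.restrict_eq_zero.mpr (by simp)]
    exact integrable_zero_measure
  have hpos : IntegrableOn (fun x : ℝ => |x| ^ (-(3/4) : ℝ)) (Ioc 0 2) := by
    have := (intervalIntegral.intervalIntegrable_rpow' (a := 0) (b := 2)
      (r := -(3/4)) (by norm_num)).1
    refine this.congr_fun (fun x hx => ?_) measurableSet_Ioc
    rw [abs_of_pos hx.1]
  have hIco : IntegrableOn (fun x : ℝ => |x| ^ (-(3/4) : ℝ)) (Ico 0 2) := by
    refine (h0.union hpos).mono_set ?_
    intro x hx
    rcases eq_or_lt_of_le hx.1 with h | h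
    · exact Or.inl (by simp [← h])
    · exact Or.inr ⟨h, le_of_lt hx.2⟩
  have hneg : IntegrableOn (fun x : ℝ => |x| ^ (-(3/4) : ℝ)) (Ioc (-2) 0) := by
    have hmp := (Measure.measurePreserving_neg (volume : Measure ℝ)).restrict_preimage
      (measurableSet_Ico : MeasurableSet (Ico (0:ℝ) 2))
    have hpre : (Neg.neg ⁻¹' Ico (0:ℝ) 2) = Ioc (-2) 0 := by
      ext x
      simp only [mem_preimage, mem_Ico, mem_Ioc, neg_lt, le_neg]
      constructor
      · rintro ⟨h1, h2⟩; constructor <;> linarith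
      · rintro ⟨h1, h2⟩; constructor <;> linarith
    rw [hpre] at hmp
    have := (hmp.integrable_comp hIco.aestronglyMeasurable).mpr hIco
    simpa [Function.comp_def, IntegrableOn] using this
  refine (hneg.union hIco).mono_set ?_
  intro x hx
  rcases le_or_gt x 0 with h | h
  · exact Or.inl ⟨hx.1, h⟩
  · exact Or.inr ⟨le_of_lt h, hx.2⟩

lemma mrpow (c : ℝ) : Measurable (fun x : ℝ => x ^ c) := by measurability


lemma L3 : IntegrableOn (fun w : ℂ => ‖w‖ ^ (-(3/2) : ℝ)) (Metric.ball 0 2) := by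
  set g : ℝ × ℝ → ℝ := fun p => |p.1| ^ (-(3/4) : ℝ) * |p.2| ^ (-(3/4) : ℝ) with hg
  have hgm : Measurable g := ((mrpow _).comp measurable_fst.abs).mul ((mrpow _).comp measurable_snd.abs)
  have hL2 : IntegrableOn g (Ioo (-2:ℝ) 2 ×ˢ Ioo (-2:ℝ) 2) := by
    have := L1.mul_prod L1
    rwa [Measure.prod_restrict, ← Measure.volume_eq_prod] at this
  set e := Complex.measurableEquivRealProd with he
  have hmp := Complex.volume_preserving_equiv_real_prod.restrict_preimage
    (measurableSet_Ioo.prod measurableSet_Ioo :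
      MeasurableSet (Ioo (-2:ℝ) 2 ×ˢ Ioo (-2:ℝ) 2))
  have hcomp : IntegrableOn (g ∘ e) (e ⁻¹' (Ioo (-2:ℝ) 2 ×ˢ Ioo (-2:ℝ) 2)) :=
    (hmp.integrable_comp hL2.aestronglyMeasurable).mpr hL2
  have hsub : Metric.ball (0:ℂ) 2 ⊆ e ⁻¹' (Ioo (-2:ℝ) 2 ×ˢ Ioo (-2:ℝ) 2) := by
    intro w hw
    simp only [Metric.mem_ball, dist_zero_right] at hw
    have hre : |w.re| ≤ ‖w‖ := Complex.abs_re_le_norm w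
    have him : |w.im| ≤ ‖w‖ := Complex.abs_im_le_norm w
    have hre' := abs_lt.mp (lt_of_le_of_lt hre hw)
    have him' := abs_lt.mp (lt_of_le_of_lt him hw)
    have hew : e w = (w.re, w.im) := rfl
    simp only [mem_preimage, hew, mem_prod, mem_Ioo]
    exact ⟨⟨hre'.1, hre'.2⟩, ⟨him'.1, him'.2⟩⟩
  have hnull : volume {w : ℂ | w.re = 0 ∨ w.im = 0} = 0 := by
    have h1 : {w : ℂ | w.re = 0 ∨ w.im = 0} =
        e ⁻¹' (({0} ×ˢ univ) ∪ (univ ×ˢ {0}) : Set (ℝ × ℝ)) := by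
      ext w
      simp [e, Complex.measurableEquivRealProd_apply, eq_comm]
    rw [h1, Complex.volume_preserving_equiv_real_prod.measure_preimage
      (((measurableSet_singleton _).prod MeasurableSet.univ).union
        (MeasurableSet.univ.prod (measurableSet_singleton _))).nullMeasurableSet]
    refine le_antisymm (le_trans (measure_union_le _ _) ?_) zero_le
    rw [Measure.volume_eq_prod, Measure.prod_prod, Measure.prod_prod]
    simp
  refine Integrable.mono' (hcomp.mono_set hsub) ?_ ?_
  · exact ((mrpow _).comp measurable_norm).aestronglyMeasurable
  · have h0 : ∀ᵐ w : ℂ, ¬(w.re = 0 ∨ w.im = 0) := by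
      rw [ae_iff]
      simpa [or_iff_not_imp_left] using hnull
    have := ae_restrict_of_ae (μ := volume) (s := Metric.ball (0:ℂ) 2) h0
    filter_upwards [this] with w hw
    push_neg at hw
    obtain ⟨h1, h2⟩ := hw
    have ha : (0:ℝ) < |w.re| := abs_pos.mpr h1
    have hb : (0:ℝ) < |w.im| := abs_pos.mpr h2
    have hab : (0:ℝ) ≤ |w.re| * |w.im| := by positivity
    have hnorm : (|w.re| * |w.im|) ^ ((1:ℝ)/2) ≤ ‖w‖ := by
      rw [← Real.sqrt_eq_rpow]
      rw [show ‖w‖ = Real.sqrt (w.re^2 + w.im^2) from by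
        rw [Complex.norm_def, Complex.normSq_apply]; ring_nf]
      refine Real.sqrt_le_sqrt ?_
      nlinarith [sq_nonneg (|w.re| - |w.im|), sq_abs w.re, sq_abs w.im]
    have key : ‖w‖ ^ (-(3/2) : ℝ) ≤ ((|w.re| * |w.im|) ^ ((1:ℝ)/2)) ^ (-(3/2) : ℝ) :=
      Real.rpow_le_rpow_of_nonpos (by positivity) hnorm (by norm_num)
    rw [Real.norm_eq_abs, abs_of_nonneg (Real.rpow_nonneg (norm_nonneg _) _)]
    refine key.trans ?_
    rw [← Real.rpow_mul hab]
    have hexp : (1:ℝ)/2 * (-(3/2)) = -(3/4) := by norm_num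
    rw [hexp, Real.mul_rpow ha.le hb.le]
    exact le_of_eq rfl



noncomputable def hh : ℂ → ℝ := fun w => ‖w‖ ^ (-(3/2) : ℝ)

lemma hh_meas : Measurable hh := (mrpow _).comp measurable_norm

-- product function integrable on ball2 × ball2 × ball1
lemma L4 : IntegrableOn (fun p : ℂ × ℂ × ℂ => hh p.1 * hh p.2.1)
    (Metric.ball 0 2 ×ˢ Metric.ball 0 2 ×ˢ Metric.ball 0 1) := by
  have hb1 : IntegrableOn (fun _ : ℂ => (1:ℝ)) (Metric.ball 0 1) := by
    exact integrableOn_const measure_ball_lt_top.ne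
  have h2 : Integrable (fun q : ℂ × ℂ => hh q.1 * 1)
      ((volume.restrict (Metric.ball 0 2)).prod (volume.restrict (Metric.ball 0 1))) :=
    Integrable.mul_prod L3 hb1
  have h3 := Integrable.mul_prod (L := ℝ) L3 h2
  rw [Measure.prod_restrict, Measure.prod_restrict, ← Measure.volume_eq_prod,
    ← Measure.volume_eq_prod] at h3
  simpa [IntegrableOn, hh] using h3
-- the shear map
lemma Tmp : MeasurePreserving (fun p : ℂ × ℂ × ℂ => (p.1 - p.2.1, p.2.1 - p.2.2, p.2.2))
    volume volume := by
  have hT2 : MeasurePreserving (fun p : ℂ × ℂ × ℂ => (p.1, (p.2.1 - p.2.2, p.2.2)))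
      volume volume :=
    (MeasurePreserving.id volume).prod (measurePreserving_sub_prod volume volume)
  have hassoc : MeasurePreserving (Equiv.prodAssoc ℂ ℂ ℂ) volume volume :=
    volume_preserving_prodAssoc
  have hassoc' : MeasurePreserving (Equiv.prodAssoc ℂ ℂ ℂ).symm volume volume := by
    exact hassoc.symm (MeasurableEquiv.prodAssoc)
  have hmid : MeasurePreserving
      (fun q : (ℂ × ℂ) × ℂ => ((q.1.1 - q.1.2, q.1.2), q.2)) volume volume :=
    (measurePreserving_sub_prod volume volume).prod (MeasurePreserving.id volume)
  have hT1 : MeasurePreserving (fun p : ℂ × ℂ × ℂ => (p.1 - p.2.1, p.2)) volume volume := by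
    have := (hassoc.comp hmid).comp hassoc'
    convert this using 1
    rfl
  exact hT2.comp hT1


-- integrability of the chain density on the unit triple ball
lemma L6 : IntegrableOn (fun p : ℂ × ℂ × ℂ => hh (p.1 - p.2.1) * hh (p.2.1 - p.2.2))
    (Metric.ball 0 1 ×ˢ Metric.ball 0 1 ×ˢ Metric.ball 0 1) := by
  set T : ℂ × ℂ × ℂ → ℂ × ℂ × ℂ := fun p => (p.1 - p.2.1, p.2.1 - p.2.2, p.2.2) with hT
  set S₂ : Set (ℂ × ℂ × ℂ) := Metric.ball 0 2 ×ˢ Metric.ball 0 2 ×ˢ Metric.ball 0 1 with hS₂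
  have hS₂m : MeasurableSet S₂ :=
    measurableSet_ball.prod (measurableSet_ball.prod measurableSet_ball)
  have hmp := Tmp.restrict_preimage hS₂m
  have hcomp : IntegrableOn ((fun p : ℂ × ℂ × ℂ => hh p.1 * hh p.2.1) ∘ T) (T ⁻¹' S₂) :=
    (hmp.integrable_comp L4.aestronglyMeasurable).mpr L4
  refine (hcomp.mono_set ?_).congr_fun (fun p _ => rfl) ?_
  · rintro ⟨a, b, c⟩ h
    simp only [mem_prod, Metric.mem_ball, dist_zero_right] at h
    obtain ⟨ha, hb, hc⟩ := h
    simp only [mem_preimage, hS₂, hT, mem_prod, Metric.mem_ball, dist_zero_right]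
    refine ⟨?_, ?_, hc⟩
    · calc ‖a - b‖ ≤ ‖a‖ + ‖b‖ := norm_sub_le _ _
        _ < 2 := by linarith
    · calc ‖b - c‖ ≤ ‖b‖ + ‖c‖ := norm_sub_le _ _
        _ < 2 := by linarith
  · exact measurableSet_ball.prod (measurableSet_ball.prod measurableSet_ball)

noncomputable def E3 : (Fin 3 → ℂ) ≃ᵐ ℂ × ℂ × ℂ :=
  (MeasurableEquiv.piFinSuccAbove (fun _ : Fin 3 => ℂ) 0).trans
    ((MeasurableEquiv.refl ℂ).prodCongr (MeasurableEquiv.finTwoArrow))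

lemma E3mp : MeasurePreserving E3 volume volume :=
  ((MeasurePreserving.id volume).prod (volume_preserving_finTwoArrow ℂ)).comp
    (volume_preserving_piFinSuccAbove (fun _ : Fin 3 => ℂ) 0)

lemma permmp (σ : Equiv.Perm (Fin 3)) :
    MeasurePreserving (fun z : Fin 3 → ℂ => (z (σ 0), z (σ 1), z (σ 2))) volume volume := by
  have h1 := (volume_measurePreserving_piCongrLeft (fun _ : Fin 3 => ℂ) σ).symm
    (MeasurableEquiv.piCongrLeft (fun _ : Fin 3 => ℂ) σ)
  have h2 := E3mp.comp h1
  convert h2 using 1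
  rfl
  funext z; rfl

lemma amgm3 {a b c : ℝ} (ha : 0 ≤ a) (hb : 0 ≤ b) (hc : 0 ≤ c) :
    1 / (a * b * c) ≤
      a ^ (-(3/2):ℝ) * b ^ (-(3/2):ℝ) + b ^ (-(3/2):ℝ) * c ^ (-(3/2):ℝ)
        + c ^ (-(3/2):ℝ) * a ^ (-(3/2):ℝ) := by
  have hRHS : (0:ℝ) ≤ a ^ (-(3/2):ℝ) * b ^ (-(3/2):ℝ) + b ^ (-(3/2):ℝ) * c ^ (-(3/2):ℝ)
      + c ^ (-(3/2):ℝ) * a ^ (-(3/2):ℝ) := by positivity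
  rcases eq_or_lt_of_le ha with h | ha'
  · simp [← h]; positivity
  rcases eq_or_lt_of_le hb with h | hb'
  · simp [← h]; positivity
  rcases eq_or_lt_of_le hc with h | hc'
  · simp [← h]; positivity
  set A := a ^ (-(3/2):ℝ) with hA
  set B := b ^ (-(3/2):ℝ) with hB
  set C := c ^ (-(3/2):ℝ) with hC
  have hApos : 0 < A := Real.rpow_pos_of_pos ha' _
  have hBpos : 0 < B := Real.rpow_pos_of_pos hb' _
  have hCpos : 0 < C := Real.rpow_pos_of_pos hc' _
  have e1 : ∀ x : ℝ, 0 < x → (x ^ (-(3/2):ℝ)) ^ ((1/3):ℝ) = x ^ (-(1/2):ℝ) := by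
    intro x hx
    rw [← Real.rpow_mul hx.le]
    norm_num
  have key := Real.geom_mean_le_arith_mean3_weighted
    (by norm_num : (0:ℝ) ≤ 1/3) (by norm_num : (0:ℝ) ≤ 1/3) (by norm_num : (0:ℝ) ≤ 1/3)
    (mul_nonneg hApos.le hBpos.le) (mul_nonneg hBpos.le hCpos.le)
    (mul_nonneg hCpos.le hApos.le) (by norm_num)
  have lhs_eq : (A*B) ^ ((1/3):ℝ) * (B*C) ^ ((1/3):ℝ) * (C*A) ^ ((1/3):ℝ) = 1/(a*b*c) := by
    rw [Real.mul_rpow hApos.le hBpos.le, Real.mul_rpow hBpos.le hCpos.le,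
      Real.mul_rpow hCpos.le hApos.le, hA, hB, hC, e1 a ha', e1 b hb', e1 c hc']
    have ea : a ^ (-(1/2):ℝ) * a ^ (-(1/2):ℝ) = a⁻¹ := by
      rw [← Real.rpow_add ha']; norm_num [Real.rpow_neg_one]
    have eb : b ^ (-(1/2):ℝ) * b ^ (-(1/2):ℝ) = b⁻¹ := by
      rw [← Real.rpow_add hb']; norm_num [Real.rpow_neg_one]
    have ec : c ^ (-(1/2):ℝ) * c ^ (-(1/2):ℝ) = c⁻¹ := by
      rw [← Real.rpow_add hc']; norm_num [Real.rpow_neg_one]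
    calc a ^ (-(1/2):ℝ) * b ^ (-(1/2):ℝ) * (b ^ (-(1/2):ℝ) * c ^ (-(1/2):ℝ))
          * (c ^ (-(1/2):ℝ) * a ^ (-(1/2):ℝ))
        = (a ^ (-(1/2):ℝ) * a ^ (-(1/2):ℝ)) * (b ^ (-(1/2):ℝ) * b ^ (-(1/2):ℝ))
          * (c ^ (-(1/2):ℝ) * c ^ (-(1/2):ℝ)) := by ring
      _ = a⁻¹ * b⁻¹ * c⁻¹ := by rw [ea, eb, ec]
      _ = 1/(a*b*c) := by rw [one_div, mul_inv, mul_inv]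
  rw [← lhs_eq]
  refine key.trans ?_
  nlinarith [mul_nonneg hApos.le hBpos.le, mul_nonneg hBpos.le hCpos.le,
    mul_nonneg hCpos.le hApos.le]


lemma polydisc_measurable : MeasurableSet {z : Fin 3 → ℂ | ∀ i, ‖z i‖ < 1} := by
  have : {z : Fin 3 → ℂ | ∀ i, ‖z i‖ < 1} = ⋂ i, {z : Fin 3 → ℂ | ‖z i‖ < 1} := by
    ext z; simp
  rw [this]
  exact MeasurableSet.iInter fun i =>
    measurableSet_lt ((measurable_pi_apply i).norm) measurable_const

lemma term (σ : Equiv.Perm (Fin 3)) :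
    IntegrableOn (fun z : Fin 3 → ℂ => hh (z (σ 0) - z (σ 1)) * hh (z (σ 1) - z (σ 2)))
      {z : Fin 3 → ℂ | ∀ i, ‖z i‖ < 1} := by
  set B : Set (ℂ × ℂ × ℂ) := Metric.ball 0 1 ×ˢ Metric.ball 0 1 ×ˢ Metric.ball 0 1 with hB
  have hBm : MeasurableSet B :=
    measurableSet_ball.prod (measurableSet_ball.prod measurableSet_ball)
  set Φ : (Fin 3 → ℂ) → ℂ × ℂ × ℂ := fun z => (z (σ 0), z (σ 1), z (σ 2)) with hΦ
  have hmp := (permmp σ).restrict_preimage hBm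
  have hHm : AEStronglyMeasurable (fun p : ℂ × ℂ × ℂ => hh (p.1 - p.2.1) * hh (p.2.1 - p.2.2))
      (volume.restrict B) :=
    (Measurable.aestronglyMeasurable (by
      exact (hh_meas.comp (measurable_fst.sub measurable_snd.fst)).mul
        (hh_meas.comp (measurable_snd.fst.sub measurable_snd.snd))))
  have hcomp : IntegrableOn
      ((fun p : ℂ × ℂ × ℂ => hh (p.1 - p.2.1) * hh (p.2.1 - p.2.2)) ∘ Φ) (Φ ⁻¹' B) :=
    (hmp.integrable_comp hHm).mpr L6
  refine (hcomp.mono_set ?_).congr_fun (fun z _ => rfl) polydisc_measurable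
  intro z hz
  simp only [mem_preimage, hB, hΦ, mem_prod, Metric.mem_ball, dist_zero_right]
  exact ⟨hz (σ 0), hz (σ 1), hz (σ 2)⟩

def cyc : Equiv.Perm (Fin 3) := ⟨![1,2,0], ![2,0,1], by decide, by decide⟩
def cyc2 : Equiv.Perm (Fin 3) := ⟨![2,0,1], ![1,2,0], by decide, by decide⟩

/-- configuration-space case, `n = 3`: the density with first-order poles
along all components of the big diagonal is integrable on the open unit polydisc. -/
theorem stmt_14 :
    IntegrableOn
      (fun z : Fin 3 → ℂ => 1 / (‖z 0 - z 1‖ * ‖z 1 - z 2‖ * ‖z 2 - z 0‖))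
      {z : Fin 3 → ℂ | ∀ i, ‖z i‖ < 1} := by
  have t1 : IntegrableOn (fun z : Fin 3 → ℂ => hh (z 0 - z 1) * hh (z 1 - z 2))
      {z : Fin 3 → ℂ | ∀ i, ‖z i‖ < 1} := term (Equiv.refl _)
  have t2 : IntegrableOn (fun z : Fin 3 → ℂ => hh (z 1 - z 2) * hh (z 2 - z 0))
      {z : Fin 3 → ℂ | ∀ i, ‖z i‖ < 1} := term cyc
  have t3 : IntegrableOn (fun z : Fin 3 → ℂ => hh (z 2 - z 0) * hh (z 0 - z 1))
      {z : Fin 3 → ℂ | ∀ i, ‖z i‖ < 1} := term cyc2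
  refine Integrable.mono' (t1.add (t2.add t3)) ?_ ?_
  · refine Measurable.aestronglyMeasurable ?_
    exact measurable_const.div
      ((((measurable_pi_apply 0).sub (measurable_pi_apply 1)).norm.mul
        ((measurable_pi_apply 1).sub (measurable_pi_apply 2)).norm).mul
        ((measurable_pi_apply 2).sub (measurable_pi_apply 0)).norm)
  · refine Filter.Eventually.of_forall fun z => ?_
    rw [Real.norm_eq_abs, abs_of_nonneg (by positivity)]
    have := amgm3 (norm_nonneg (z 0 - z 1)) (norm_nonneg (z 1 - z 2)) (norm_nonneg (z 2 - z 0))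
    simpa [hh, add_assoc] using this
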